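/- Let (B_n) be a sequence of bounded operators on the Hilbert space ℓ² of square-summable sequences whose matrices (in the canonical basis) are uniformly banded (there is N with (B_n)_{i,j} = 0 whenever |i − j| > N for all n) and with sup_n ‖B_n‖ < ∞. If B_n converges weakly to a bounded operator B, then B_n converges strongly to B. -/

import Mathlib

set_option maxHeartbeats 1000000


noncomputable section

/-- The Hilbert space ℓ² of square-summable complex sequences. -/
abbrev H2 : Type := lp (fun _ : ℕ => ℂ) 2

/-- The canonical orthonormal basis vectors of ℓ². -/
def e2 (k : ℕ) : H2 := lp.single 2 k (1 : ℂ)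

open Filter

/-- Coordinate via inner product with basis vector. -/
lemma inner_e2 (f : H2) (i : ℕ) : inner (𝕜 := ℂ) f (e2 i) = (starRingEnd ℂ) (f i) := by
  simpa [e2] using lp.inner_single_right (𝕜 := ℂ) (G := fun _ : ℕ => ℂ) i (1 : ℂ) f

lemma coord_of_inner (f : H2) (i : ℕ) : f i = (starRingEnd ℂ) (inner (𝕜 := ℂ) f (e2 i)) := by
  rw [inner_e2]; simp

/-- A uniformly banded, uniformly bounded, weakly convergent sequence of bounded
operators on ℓ² is strongly convergent. -/
theorem stmt18 (B : ℕ → H2 →L[ℂ] H2) (Blim : H2 →L[ℂ] H2) (N : ℕ) (Cb : ℝ)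
    (hband : ∀ (n i j : ℕ), i + N < j ∨ j + N < i →
      inner (𝕜 := ℂ) (B n (e2 j)) (e2 i) = (0 : ℂ))
    (hbd : ∀ n : ℕ, ‖B n‖ ≤ Cb)
    (hweak : ∀ x y : H2, Filter.Tendsto (fun n => inner (𝕜 := ℂ) (B n x) y)
      Filter.atTop (nhds (inner (𝕜 := ℂ) (Blim x) y))) :
    ∀ x : H2, Filter.Tendsto (fun n => B n x) Filter.atTop (nhds (Blim x)) := by
  classical
  have hC0 : (0:ℝ) ≤ Cb := le_trans (norm_nonneg _) (hbd 0)
  set C : ℝ := Cb + ‖Blim‖ with hCdef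
  have hCn : 0 ≤ C := add_nonneg hC0 (norm_nonneg _)
  have hTbd : ∀ (n : ℕ) (y : H2), ‖B n y - Blim y‖ ≤ C * ‖y‖ := by
    intro n y
    calc ‖B n y - Blim y‖ ≤ ‖B n y‖ + ‖Blim y‖ := norm_sub_le _ _
      _ ≤ ‖B n‖ * ‖y‖ + ‖Blim‖ * ‖y‖ := add_le_add ((B n).le_opNorm y) (Blim.le_opNorm y)
      _ ≤ Cb * ‖y‖ + ‖Blim‖ * ‖y‖ := by
          have := hbd n
          have h0 : (0:ℝ) ≤ ‖y‖ := norm_nonneg _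
          nlinarith
      _ = C * ‖y‖ := by rw [hCdef]; ring
  -- coordinate-wise convergence
  have hcoord : ∀ (y : H2) (i : ℕ),
      Tendsto (fun n => (B n y) i - (Blim y) i) atTop (nhds 0) := by
    intro y i
    have h2 : Tendsto
        (fun n => inner (𝕜 := ℂ) (B n y) (e2 i) - inner (𝕜 := ℂ) (Blim y) (e2 i))
        atTop (nhds 0) := by
      have := (hweak y (e2 i)).sub
        (tendsto_const_nhds (x := inner (𝕜 := ℂ) (Blim y) (e2 i)) (f := atTop (α := ℕ)))
      simpa using this
    have h3 : Tendsto (fun n => (starRingEnd ℂ)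
        (inner (𝕜 := ℂ) (B n y) (e2 i) - inner (𝕜 := ℂ) (Blim y) (e2 i)))
        atTop (nhds 0) := by
      have := (Complex.continuous_conj.tendsto (0 : ℂ)).comp h2
      simpa only [Function.comp_def, map_zero] using this
    have heq : (fun n => (starRingEnd ℂ)
        (inner (𝕜 := ℂ) (B n y) (e2 i) - inner (𝕜 := ℂ) (Blim y) (e2 i)))
        = fun n => (B n y) i - (Blim y) i := by
      funext n
      rw [map_sub, ← coord_of_inner, ← coord_of_inner]
    rw [heq] at h3
    exact h3
  -- Blim is banded too
  have hbandL : ∀ i j : ℕ, i + N < j ∨ j + N < i →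
      inner (𝕜 := ℂ) (Blim (e2 j)) (e2 i) = (0 : ℂ) := by
    intro i j hij
    have h1 := hweak (e2 j) (e2 i)
    have h2 : Tendsto (fun n => inner (𝕜 := ℂ) (B n (e2 j)) (e2 i)) atTop
        (nhds (0 : ℂ)) := by
      simpa [hband _ _ _ hij] using tendsto_const_nhds (α := ℂ) (f := atTop (α := ℕ))
    exact tendsto_nhds_unique h1 h2
  -- convergence on basis vectors
  have hbasis : ∀ j : ℕ, Tendsto (fun n => B n (e2 j)) atTop (nhds (Blim (e2 j))) := by
    intro j
    rw [← tendsto_sub_nhds_zero_iff]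
    set s : Finset ℕ := Finset.range (j + N + 1) with hs
    set g : ℕ → H2 := fun n => B n (e2 j) - Blim (e2 j) with hg
    have hzero : ∀ (n i : ℕ), i ∉ s → (g n) i = 0 := by
      intro n i hi
      have hij : j + N < i := by
        simp only [hs, Finset.mem_range] at hi; omega
      have hB : (B n (e2 j)) i = 0 := by
        rw [coord_of_inner, hband n i j (Or.inr hij)]; simp
      have hL : (Blim (e2 j)) i = 0 := by
        rw [coord_of_inner, hbandL i j (Or.inr hij)]; simp
      have : (g n) i = (B n (e2 j)) i - (Blim (e2 j)) i := by
        rw [hg]; simp [lp.coeFn_sub]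
      rw [this, hB, hL, sub_zero]
    have heq : ∀ n, g n = ∑ i ∈ s, lp.single (E := fun _ : ℕ => ℂ) 2 i ((g n) i) := by
      intro n
      apply lp.ext
      funext i
      by_cases hi : i ∈ s
      · rw [lp.coeFn_sum]
        simp only [Finset.sum_apply, lp.single_apply]
        rw [Finset.sum_eq_single i]
        · simp
        · intro b _ hb; exact dif_neg (Ne.symm hb)
        · intro h; exact absurd hi h
      · rw [hzero n i hi, lp.coeFn_sum]
        simp only [Finset.sum_apply, lp.single_apply]
        symm
        apply Finset.sum_eq_zero
        intro b hb
        rcases eq_or_ne i b with rfl | hne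
        · simp [hzero n i hi]
        · exact dif_neg hne
    have hnorm : ∀ n, ‖g n‖ ≤ ∑ i ∈ s, ‖(g n) i‖ := by
      intro n
      calc ‖g n‖ = ‖∑ i ∈ s, lp.single (E := fun _ : ℕ => ℂ) 2 i ((g n) i)‖ := by rw [← heq]
        _ ≤ ∑ i ∈ s, ‖lp.single (E := fun _ : ℕ => ℂ) 2 i ((g n) i)‖ := norm_sum_le _ _
        _ = ∑ i ∈ s, ‖(g n) i‖ := by
            refine Finset.sum_congr rfl fun i _ => ?_
            exact lp.norm_single (E := fun _ : ℕ => ℂ) (p := 2) (by norm_num) i ((g n) i)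
    have hsumto : Tendsto (fun n => ∑ i ∈ s, ‖(g n) i‖) atTop (nhds 0) := by
      have : Tendsto (fun n => ∑ i ∈ s, ‖(g n) i‖) atTop (nhds (∑ i ∈ s, (0:ℝ))) := by
        apply tendsto_finset_sum
        intro i _
        have h := (hcoord (e2 j) i).norm
        simp only [norm_zero] at h
        exact h
      simpa using this
    have := squeeze_zero (fun n => norm_nonneg (g n)) hnorm hsumto
    exact tendsto_zero_iff_norm_tendsto_zero.mpr this
  -- general x
  intro x
  rw [← tendsto_sub_nhds_zero_iff]
  rw [NormedAddCommGroup.tendsto_nhds_zero]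
  intro ε hε
  have hδ : (0:ℝ) < ε / (2 * (C + 1)) := by positivity
  have hsum := lp.hasSum_single (E := fun _ : ℕ => ℂ) (p := 2) (by norm_num) x
  obtain ⟨s, hs⟩ := (hsum.eventually (Metric.ball_mem_nhds x hδ)).exists
  set x' : H2 := ∑ i ∈ s, lp.single (E := fun _ : ℕ => ℂ) 2 i (x i) with hx'def
  have hx' : ‖x - x'‖ < ε / (2 * (C + 1)) := by
    rw [norm_sub_rev]
    simpa [hx'def, dist_eq_norm] using hs
  have hsingle : ∀ i : ℕ, lp.single (E := fun _ : ℕ => ℂ) 2 i (x i) = (x i) • e2 i := by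
    intro i
    rw [e2, ← lp.single_smul]
    simp
  have hx'tend : Tendsto (fun n => B n x') atTop (nhds (Blim x')) := by
    have hBn : ∀ n, B n x' = ∑ i ∈ s, (x i) • B n (e2 i) := by
      intro n
      rw [hx'def, map_sum]
      exact Finset.sum_congr rfl fun i _ => by rw [hsingle i, map_smul]
    have hBl : Blim x' = ∑ i ∈ s, (x i) • Blim (e2 i) := by
      rw [hx'def, map_sum]
      exact Finset.sum_congr rfl fun i _ => by rw [hsingle i, map_smul]
    simp only [hBn, hBl]
    exact tendsto_finset_sum _ fun i _ => (hbasis i).const_smul (x i)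
  have hev : ∀ᶠ n in atTop, ‖B n x' - Blim x'‖ < ε / 2 := by
    have := (tendsto_sub_nhds_zero_iff.mpr hx'tend)
    rw [NormedAddCommGroup.tendsto_nhds_zero] at this
    exact this (ε / 2) (by positivity)
  filter_upwards [hev] with n hn
  have hdecomp : B n x - Blim x = (B n (x - x') - Blim (x - x')) + (B n x' - Blim x') := by
    simp only [map_sub]
    abel
  calc ‖B n x - Blim x‖
      ≤ ‖B n (x - x') - Blim (x - x')‖ + ‖B n x' - Blim x'‖ := by
        rw [hdecomp]; exact norm_add_le _ _
    _ ≤ C * ‖x - x'‖ + ε / 2 := add_le_add (hTbd n (x - x')) hn.le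
    _ < ε := by
        have h1 : C * ‖x - x'‖ ≤ C * (ε / (2 * (C + 1))) :=
          mul_le_mul_of_nonneg_left hx'.le hCn
        have hC1 : (0:ℝ) < C + 1 := by linarith
        have heq2 : C * (ε / (2 * (C + 1))) + ε / (2 * (C + 1)) = ε / 2 := by
          field_simp
        linarith
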